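/- If x is a binary word such that 01x10 is a factor of the Thue–Morse word t, then the word 001·θ̄(x)·011, where θ̄(x) denotes the letterwise complement (0 ↔ 1) of θ(x), is cubefree and has length |θ(x)| + 6. (Equivalently, the complement of 110·θ(x)·100 is a cubefree word with prefix 00 and suffix 11.) -/
import Mathlib


/-- The Thue–Morse morphism θ (0 ↦ 01, 1 ↦ 10), with 0 = `false`, 1 = `true`,
applied letterwise to a word. -/
def tmMap (w : List Bool) : List Bool :=
  w.flatMap (fun b => if b then [true, false] else [false, true])

/-- A word is cubefree if it contains no non-empty factor of the form `x ++ x ++ x`. -/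
def Cubefree (w : List Bool) : Prop :=
  ∀ x : List Bool, x ≠ [] → ¬ (x ++ x ++ x) <:+: w

/-- `w` is a factor of the Thue–Morse word `t = θ^ω(0)`: since the words `θ^m(0)`
are prefixes of `t` whose lengths tend to infinity, this holds iff `w` is an
infix of `θ^m(0)` for some `m`. -/
def FactorTM (w : List Bool) : Prop :=
  ∃ m : ℕ, w <:+: tmMap^[m] [false]

/-- The binary morphism determined by `h : Bool → List Bool` is cubefree. -/
def CubefreeMorphism (h : Bool → List Bool) : Prop :=
  ∀ w : List Bool, Cubefree w → Cubefree (w.flatMap h)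

/-! ### The Thue–Morse sequence as a function on ℕ -/

def tm (n : ℕ) : Bool :=
  if n = 0 then false else xor (n % 2 == 1) (tm (n / 2))
decreasing_by exact Nat.div_lt_self (Nat.pos_of_ne_zero (by assumption)) one_lt_two

lemma tm_zero : tm 0 = false := by simp [tm]

lemma tm_two_mul (m : ℕ) : tm (2*m) = tm m := by
  rcases Nat.eq_zero_or_pos m with rfl | hm
  · simp
  · rw [tm]
    simp [Nat.mul_div_cancel_left, Nat.mul_ne_zero, hm.ne', Nat.mul_mod_right]

lemma tm_two_mul_add_one (m : ℕ) : tm (2*m+1) = !tm m := by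
  rw [tm]
  have h1 : (2*m+1) % 2 = 1 := by omega
  have h2 : (2*m+1) / 2 = m := by omega
  simp [h1, h2, Bool.xor_comm]

lemma no_three (r : ℕ) : tm r = tm (r+1) → tm (r+1) = tm (r+2) → False := by
  intro h1 h2
  rcases Nat.even_or_odd r with ⟨q, hq⟩ | ⟨q, hq⟩
  · subst hq
    rw [show q+q = 2*q by ring] at h1
    rw [tm_two_mul, tm_two_mul_add_one] at h1
    simp at h1
  · subst hq
    rw [show 2*q+1+1 = 2*(q+1) by ring, tm_two_mul,
        show 2*q+1+2 = 2*(q+1)+1 by ring, tm_two_mul_add_one] at h2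
    simp at h2

theorem tm_no_period : ∀ n, 1 ≤ n → ∀ k, (∀ j < 2*n, tm (k+j) = tm (k+j+n)) → False := by
  intro n
  induction n using Nat.strong_induction_on with
  | _ n IH =>
    intro hn k H
    rcases Nat.lt_or_ge n 2 with h2 | h2
    · -- n = 1
      interval_cases n
      have h1 := H 0 (by norm_num)
      have h2 := H 1 (by norm_num)
      simp at h1 h2
      exact no_three k h1 (by rw [show k+1+1 = k+2 by ring] at h2; exact h2)
    rcases Nat.even_or_odd n with ⟨m, hm⟩ | ⟨m, hm⟩
    · -- n = 2m, m ≥ 1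
      have hm' : n = 2*m := by omega
      subst hm'
      have hm1 : 1 ≤ m := by omega
      refine IH m (by omega) hm1 ((k+1)/2) ?_
      intro j hj
      have hpar : 2*((k+1)/2) = k ∨ 2*((k+1)/2) = k+1 := by omega
      rcases hpar with hp | hp
      · have := H (2*j) (by omega)
        calc tm ((k+1)/2 + j) = tm (2*((k+1)/2 + j)) := (tm_two_mul _).symm
          _ = tm (k + 2*j) := by rw [show 2*((k+1)/2+j) = k + 2*j by omega]
          _ = tm (k + 2*j + 2*m) := this
          _ = tm (2*((k+1)/2 + j + m)) := by rw [show k + 2*j + 2*m = 2*((k+1)/2 + j + m) by omega]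
          _ = tm ((k+1)/2 + j + m) := tm_two_mul _
      · have := H (2*j+1) (by omega)
        calc tm ((k+1)/2 + j) = tm (2*((k+1)/2 + j)) := (tm_two_mul _).symm
          _ = tm (k + (2*j+1)) := by rw [show 2*((k+1)/2+j) = k + (2*j+1) by omega]
          _ = tm (k + (2*j+1) + 2*m) := this
          _ = tm (2*((k+1)/2 + j + m)) := by rw [show k + (2*j+1) + 2*m = 2*((k+1)/2 + j + m) by omega]
          _ = tm ((k+1)/2 + j + m) := tm_two_mul _
    · -- n = 2m+1, m ≥ 1
      have hm1 : 1 ≤ m := by omega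
      set q := (k+1)/2 with hq
      have hpar : 2*q = k ∨ 2*q = k+1 := by omega
      have key : ∀ d, 2*q + d < k + 2*n → 2*q + d ≥ k → tm (2*q+d) = tm (2*q+d+n) := by
        intro d h1 h2
        have := H (2*q + d - k) (by omega)
        rwa [show k + (2*q+d-k) = 2*q+d by omega] at this
      have e0 : tm (2*q) = tm (2*q+n) := key 0 (by omega) (by omega)
      have e1 : tm (2*q+1) = tm (2*q+1+n) := key 1 (by omega) (by omega)
      have e2 : tm (2*q+2) = tm (2*q+2+n) := key 2 (by omega) (by omega)
      have e3 : tm (2*q+3) = tm (2*q+3+n) := key 3 (by omega) (by omega)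
      rw [hm] at e0 e1 e2 e3
      rw [tm_two_mul, show 2*q + (2*m+1) = 2*(q+m)+1 by ring, tm_two_mul_add_one] at e0
      rw [tm_two_mul_add_one, show 2*q+1 + (2*m+1) = 2*(q+m+1) by ring, tm_two_mul] at e1
      rw [show 2*q+2 = 2*(q+1) by ring, tm_two_mul,
          show 2*(q+1) + (2*m+1) = 2*(q+m+1)+1 by ring, tm_two_mul_add_one] at e2
      rw [show 2*q+3 = 2*(q+1)+1 by ring, tm_two_mul_add_one,
          show 2*(q+1)+1 + (2*m+1) = 2*(q+m+2) by ring, tm_two_mul] at e3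
      apply no_three (q+m)
      · rw [show q+m+1 = q+(m+1) by ring, ← add_assoc] at e1
        cases hb : tm q <;> simp [hb] at e0 e1 <;> simp [e0, e1]
      · rw [show q+m+1+1 = q+m+2 by ring]
        rw [show q+m+1 = q+(m+1) by ring, ← add_assoc] at e2
        rw [show q+m+2 = q+(m+2) by ring, ← add_assoc] at e3
        cases hb : tm (q+1) <;> simp [hb] at e2 e3 <;> simp [e2, e3]

/-! ### Iterates of θ list the Thue–Morse sequence -/

lemma tmMap_append (a b : List Bool) : tmMap (a ++ b) = tmMap a ++ tmMap b := by
  simp [tmMap]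

lemma tmMap_range (N : ℕ) :
    tmMap ((List.range N).map tm) = (List.range (2*N)).map tm := by
  induction N with
  | zero => simp [tmMap]
  | succ N ih =>
    rw [List.range_succ, List.map_append, tmMap_append, ih,
        show 2*(N+1) = 2*N + 1 + 1 by ring, List.range_succ, List.range_succ]
    rw [List.map_append, List.map_append, List.append_assoc, List.append_cancel_left_eq]
    simp only [List.map_cons, List.map_nil]
    rw [tm_two_mul, tm_two_mul_add_one]
    cases h : tm N <;> simp [h, tmMap]

lemma tmMap_pow (m : ℕ) : tmMap^[m] [false] = (List.range (2^m)).map tm := by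
  induction m with
  | zero =>
    rw [pow_zero, show List.range 1 = [0] from rfl]
    simp [tm_zero]
  | succ m ih =>
    rw [Function.iterate_succ_apply', ih, tmMap_range, pow_succ, mul_comm]

/-! ### Factors of the Thue–Morse word are cubefree -/

lemma factorTM_cubefree (w : List Bool) (h : FactorTM w) : Cubefree w := by
  obtain ⟨m, hinf⟩ := h
  intro x hx hcube
  have hfull : x ++ x ++ x <:+: (List.range (2^m)).map tm := by
    rw [← tmMap_pow]; exact hcube.trans hinf
  obtain ⟨s, t, hst⟩ := hfull
  set n := x.length with hn'
  have hn : 1 ≤ n := List.length_pos_iff.mpr hx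
  have hlen3 : (x++x++x).length = 3*n := by simp [hn']; ring
  have hfullen : s.length + 3*n + t.length = 2^m := by
    have := congrArg List.length hst
    simp at this
    omega
  have hidx : ∀ j, j < 3*n → ((x++x++x))[j]? = some (tm (s.length + j)) := by
    intro j hj
    have h1 : ((List.range (2^m)).map tm)[s.length + j]? = some (tm (s.length + j)) := by
      rw [List.getElem?_eq_getElem (by simp; omega)]
      simp
    rw [← hst, List.append_assoc, List.getElem?_append_right (by omega : s.length ≤ s.length + j),
        Nat.add_sub_cancel_left, List.getElem?_append_left (by simp; omega)] at h1
    exact h1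
  have hper : ∀ j < 2*n, tm (s.length + j) = tm (s.length + j + n) := by
    intro j hj
    have p1 : ((x++x++x))[j]? = (x++x)[j]? :=
      List.getElem?_append_left (by simp; omega)
    have p2 : ((x++x++x))[j+n]? = (x++x)[j]? := by
      rw [List.append_assoc, List.getElem?_append_right (by omega : x.length ≤ j + n)]
      congr 1
      omega
    have q1 := hidx j (by omega)
    have q2 := hidx (j+n) (by omega)
    rw [p1] at q1
    rw [p2] at q2
    rw [q1, ← add_assoc] at q2
    exact Option.some_injective _ q2
  exact tm_no_period n hn s.length hper

lemma cubefree_map_not (w : List Bool) (h : Cubefree w) :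
    Cubefree (w.map (fun b => !b)) := by
  intro x hx hinf
  have h2 := hinf.map (fun b => !b)
  rw [List.map_map] at h2
  simp only [List.map_append] at h2
  have hw : w.map ((fun b : Bool => !b) ∘ (fun b : Bool => !b)) = w := by
    simp only [Function.comp_def, Bool.not_not, List.map_id']
  rw [hw] at h2
  exact h (x.map (fun b => !b)) (by simpa using hx) h2

lemma factorTM_infix {u w : List Bool} (h : u <:+: w) (hw : FactorTM w) : FactorTM u := by
  obtain ⟨m, hm⟩ := hw
  exact ⟨m, h.trans hm⟩

lemma factorTM_tmMap {w : List Bool} (hw : FactorTM w) : FactorTM (tmMap w) := by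
  obtain ⟨m, s, t, h⟩ := hw
  refine ⟨m+1, tmMap s, tmMap t, ?_⟩
  rw [Function.iterate_succ_apply', ← h, tmMap_append, tmMap_append]

theorem stmt15 (x : List Bool)
    (hx : FactorTM ([false, true] ++ x ++ [true, false])) :
    Cubefree ([false, false, true] ++ (tmMap x).map (fun b => !b) ++ [false, true, true]) ∧
    ([false, false, true] ++ (tmMap x).map (fun b => !b) ++ [false, true, true]).length
      = (tmMap x).length + 6 := by
  constructor
  · have h1 : FactorTM (tmMap ([false, true] ++ x ++ [true, false])) := factorTM_tmMap hx
    have h2 : tmMap ([false, true] ++ x ++ [true, false])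
        = [false] ++ ([true, true, false] ++ tmMap x ++ [true, false, false]) ++ [true] := by
      rw [tmMap_append, tmMap_append]
      simp [tmMap]
    have h3 : FactorTM ([true, true, false] ++ tmMap x ++ [true, false, false]) :=
      factorTM_infix ⟨[false], [true], h2.symm⟩ h1
    have h4 := cubefree_map_not _ (factorTM_cubefree _ h3)
    have h5 : ([true, true, false] ++ tmMap x ++ [true, false, false]).map (fun b => !b)
        = [false, false, true] ++ (tmMap x).map (fun b => !b) ++ [false, true, true] := by
      simp
    rwa [h5] at h4
  · simp
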